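/- Let a = yz + 1 - y - z and b = y + z - 1 with y, z > 1 (so a > 0 and b > 1), and define ψ₄(u) = (a+b)²·[2(a+b)/(au+b)³ - 1/(au+b)²] for u ∈ (0,1). Then ∫₀¹ (-log(1-u))·ψ₄(u) du = (a+b)/b = yz/(y+z-1). -/

import Mathlib

open Set MeasureTheory intervalIntegral

lemma psi4_hasDerivAt (a b : ℝ) (ha : 0 < a) (hb : 0 < b) {x : ℝ} (hx : x ∈ Set.Ioo (0:ℝ) 1) :
    HasDerivAt (fun u : ℝ => ((1 - u) * Real.log (1 - u)) * ((a + b) ^ 2 / (a * u + b) ^ 2)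
      - (a + b) ^ 2 / (a * (a * u + b)))
      ((-Real.log (1 - x)) *
        ((a + b) ^ 2 * (2 * (a + b) / (a * x + b) ^ 3 - 1 / (a * x + b) ^ 2))) x := by
  have hx1 : (0:ℝ) < 1 - x := by linarith [hx.2]
  have hDx : 0 < a * x + b := by nlinarith [hx.1]
  have hlog : HasDerivAt (fun u : ℝ => Real.log (1 - u)) ((1 - x)⁻¹ * (-1)) x :=
    (Real.hasDerivAt_log hx1.ne').comp x ((hasDerivAt_id x).const_sub 1)
  have hlin : HasDerivAt (fun u : ℝ => a * u + b) (a * 1) x :=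
    ((hasDerivAt_id x).const_mul a).add_const b
  have hpow2 : HasDerivAt (fun u : ℝ => (a * u + b) ^ 2)
      ((2 : ℕ) * (a * x + b) ^ (2 - 1) * (a * 1)) x := hlin.pow 2
  have hq : HasDerivAt (fun u : ℝ => (a + b) ^ 2 / (a * u + b) ^ 2)
      (-(2 * a * (a + b) ^ 2) / (a * x + b) ^ 3) x := by
    have h := (hasDerivAt_const x ((a + b) ^ 2)).div hpow2 (pow_ne_zero 2 hDx.ne')
    refine h.congr_deriv ?_
    field_simp
    ring
  have h1 : HasDerivAt (fun u : ℝ => (1 - u) * Real.log (1 - u))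
      (-Real.log (1 - x) - 1) x := by
    have h := ((hasDerivAt_id x).const_sub 1).mul hlog
    refine h.congr_deriv ?_
    simp only [id]
    field_simp
    ring
  have h4 : HasDerivAt (fun u : ℝ => (a + b) ^ 2 / (a * (a * u + b)))
      (-((a + b) ^ 2) / (a * x + b) ^ 2) x := by
    have h := (hasDerivAt_const x ((a + b) ^ 2)).div (hlin.const_mul a)
      (mul_ne_zero ha.ne' hDx.ne')
    refine h.congr_deriv ?_
    field_simp
    ring
  have h5 := (h1.mul hq).sub h4
  refine h5.congr_deriv ?_
  field_simp
  ring

lemma psi4_cont (a b : ℝ) (ha : 0 < a) (hb : 0 < b) :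
    ContinuousOn (fun u : ℝ => ((1 - u) * Real.log (1 - u)) * ((a + b) ^ 2 / (a * u + b) ^ 2)
      - (a + b) ^ 2 / (a * (a * u + b))) (Set.Icc (0:ℝ) 1) := by
  have hD : ∀ u : ℝ, 0 ≤ u → 0 < a * u + b := fun u hu => by nlinarith
  apply ContinuousOn.sub
  · exact ((Real.continuous_mul_log.comp (continuous_const.sub continuous_id)).continuousOn).mul
      (continuousOn_const.div (by fun_prop)
        (fun u hu => pow_ne_zero _ (hD u hu.1).ne'))
  · exact continuousOn_const.div (by fun_prop)
      (fun u hu => mul_ne_zero ha.ne' (hD u hu.1).ne')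

lemma neglog_intervalIntegrable :
    IntervalIntegrable (fun u : ℝ => -Real.log (1 - u)) MeasureTheory.volume 0 1 := by
  apply intervalIntegrable_deriv_of_nonneg
    (g := fun u : ℝ => (1 - u) * Real.log (1 - u) + u)
  · exact ((Real.continuous_mul_log.comp (continuous_const.sub continuous_id)).add
      continuous_id).continuousOn
  · intro x hx
    norm_num at hx
    have hx1 : (0:ℝ) < 1 - x := by linarith [hx.2]
    have hlog : HasDerivAt (fun u : ℝ => Real.log (1 - u)) ((1 - x)⁻¹ * (-1)) x :=
      (Real.hasDerivAt_log hx1.ne').comp x ((hasDerivAt_id x).const_sub 1)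
    have h1 := (((hasDerivAt_id x).const_sub 1).mul hlog).add (hasDerivAt_id x)
    refine h1.congr_deriv ?_
    simp only [id]
    field_simp
    ring
  · intro x hx
    norm_num at hx
    have := Real.log_nonpos (by linarith [hx.1] : (0:ℝ) ≤ 1 - x) (by linarith [hx.2])
    linarith

lemma psi4_integral_ab (a b : ℝ) (ha : 0 < a) (hb : 0 < b) :
    (∫ u in (0:ℝ)..1, (-Real.log (1 - u)) *
        ((a + b) ^ 2 * (2 * (a + b) / (a * u + b) ^ 3 - 1 / (a * u + b) ^ 2)))
      = (a + b) / b := by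
  have hD : ∀ u : ℝ, 0 ≤ u → 0 < a * u + b := fun u hu => by nlinarith
  have hψ : ContinuousOn (fun u : ℝ =>
      (a + b) ^ 2 * (2 * (a + b) / (a * u + b) ^ 3 - 1 / (a * u + b) ^ 2)) (Set.uIcc (0:ℝ) 1) := by
    rw [Set.uIcc_of_le zero_le_one]
    apply ContinuousOn.mul continuousOn_const
    apply ContinuousOn.sub
    · exact continuousOn_const.div (by fun_prop) (fun u hu => pow_ne_zero _ (hD u hu.1).ne')
    · exact continuousOn_const.div (by fun_prop) (fun u hu => pow_ne_zero _ (hD u hu.1).ne')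
  have hint : IntervalIntegrable (fun u : ℝ => (-Real.log (1 - u)) *
      ((a + b) ^ 2 * (2 * (a + b) / (a * u + b) ^ 3 - 1 / (a * u + b) ^ 2)))
      MeasureTheory.volume 0 1 :=
    neglog_intervalIntegrable.mul_continuousOn hψ
  have key := intervalIntegral.integral_eq_sub_of_hasDeriv_right_of_le zero_le_one
    (psi4_cont a b ha hb)
    (fun x hx => (psi4_hasDerivAt a b ha hb hx).hasDerivWithinAt) hint
  rw [key]
  norm_num
  have hab : (0:ℝ) < a + b := by positivity
  field_simp
  ring

theorem psi4_integral (y z : ℝ) (hy : 1 < y) (hz : 1 < z) :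
    let a := y * z + 1 - y - z
    let b := y + z - 1
    (∫ u in (0:ℝ)..1, (-Real.log (1 - u)) *
        ((a + b) ^ 2 * (2 * (a + b) / (a * u + b) ^ 3 - 1 / (a * u + b) ^ 2)))
      = y * z / (y + z - 1) := by
  intro a b
  have ha' : a = y * z + 1 - y - z := rfl
  have hb' : b = y + z - 1 := rfl
  clear_value a b
  have ha : 0 < a := by
    have h := mul_pos (sub_pos.mpr hy) (sub_pos.mpr hz); rw [ha']; nlinarith
  have hb : 0 < b := by rw [hb']; linarith
  rw [psi4_integral_ab a b ha hb, ha', hb']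
  have hyz : (0:ℝ) < y + z - 1 := by linarith
  field_simp
  ring
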